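/- Let T = CP(n; n_1, …, n_k) ∈ C(n,k) be a caterpillar tree with respect to the path P_k = v_1⋯v_k, where 2 ≤ k ≤ n − 1. Then T ⪰ CP_{n,k}^{⌈k/2⌉}, and r(T) = r(CP_{n,k}^{⌈k/2⌉}) if and only if T is isomorphic to CP_{n,k}^{⌈k/2⌉}. -/

import Mathlib

namespace TreeOrder

attribute [local instance] Classical.propDecidable

variable {V : Type*} {W : Type*}

/-- `side G u v` = number of vertices strictly closer to `u` than to `v`;
for an edge `uv` of a tree this is the order of the component of `T - uv` containing `u`. -/
noncomputable def side [Fintype V] (G : SimpleGraph V) (u v : V) : ℕ :=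
  (Finset.univ.filter fun w => G.dist w u < G.dist w v).card

/-- `mu G u v = min (n_u(e), n_v(e))` for the edge `e = uv`. -/
noncomputable def mu [Fintype V] (G : SimpleGraph V) (u v : V) : ℕ :=
  min (side G u v) (side G v u)

/-- `mu` as a function on unordered pairs. -/
noncomputable def muE [Fintype V] (G : SimpleGraph V) : Sym2 V → ℕ :=
  Sym2.lift ⟨fun u v => mu G u v, fun _ _ => min_comm _ _⟩

/-- `r G i` = number of edges `e` of `G` with `μ(e) = i`. -/
noncomputable def r [Fintype V] (G : SimpleGraph V) (i : ℕ) : ℕ :=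
  (Finset.univ.filter fun e : Sym2 V => e ∈ G.edgeSet ∧ muE G e = i).card

/-- `tailSum G n k = Σ_{i=k}^{⌊n/2⌋} r_i(G)`. -/
noncomputable def tailSum [Fintype V] (G : SimpleGraph V) (n k : ℕ) : ℕ :=
  ∑ i ∈ Finset.Icc k (n / 2), r G i

/-- The order `⪯` on trees with `n` vertices, via edge division vectors. -/
def Preceq [Fintype V] [Fintype W] (n : ℕ) (G : SimpleGraph V) (H : SimpleGraph W) : Prop :=
  ∀ k, 1 ≤ k → k ≤ n / 2 → tailSum G n k ≤ tailSum H n k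

/-- The strict order `≺`. -/
def Prec [Fintype V] [Fintype W] (n : ℕ) (G : SimpleGraph V) (H : SimpleGraph W) : Prop :=
  Preceq n G H ∧ ∃ k, 1 ≤ k ∧ k ≤ n / 2 ∧ tailSum G n k < tailSum H n k

/-- Equality of edge division vectors `r(G) = r(H)`. -/
def SameEdgeDivision [Fintype V] [Fintype W] (n : ℕ) (G : SimpleGraph V)
    (H : SimpleGraph W) : Prop :=
  ∀ i, 1 ≤ i → i ≤ n / 2 → r G i = r H i

/-- `u` is a centroidal vertex: `n_u(e) ≥ n/2` for every edge `e` incident to `u`. -/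
def IsCentroidal [Fintype V] (G : SimpleGraph V) (u : V) : Prop :=
  ∀ v, G.Adj u v → Fintype.card V ≤ 2 * side G u v

/-- `u` is a proper centroidal vertex: `n_u(e) > ⌈n/2⌉` for every edge `e` incident to `u`. -/
def IsProperCentroidal [Fintype V] (G : SimpleGraph V) (u : V) : Prop :=
  ∀ v, G.Adj u v → (Fintype.card V + 1) / 2 < side G u v

/-- The edge `uv` is a center edge: `μ(uv) = ⌊n/2⌋`. -/
def IsCenterEdge [Fintype V] (G : SimpleGraph V) (u v : V) : Prop :=
  G.Adj u v ∧ mu G u v = Fintype.card V / 2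

/-- degree of a vertex -/
noncomputable def deg [Fintype V] (G : SimpleGraph V) (v : V) : ℕ :=
  (Finset.univ.filter fun w => G.Adj v w).card

/-- The path `P_n` on `n` vertices. -/
def pathG (n : ℕ) : SimpleGraph (Fin n) :=
  SimpleGraph.fromRel fun x y => (x : ℕ) + 1 = y

/-- The star `S_n` on `n` vertices. -/
def starG (n : ℕ) : SimpleGraph (Fin n) :=
  SimpleGraph.fromRel fun x _ => (x : ℕ) = 0

/-- The double star path `CP_{n;a,b}` : a path on `n - a - b` vertices (at positions
`a, …, n - b - 1`) with `a` pendent vertices attached to its first vertex and `b`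
pendent vertices attached to its last vertex. -/
def doubleStar (n a b : ℕ) : SimpleGraph (Fin n) :=
  SimpleGraph.fromRel fun x y =>
    ((x : ℕ) < a ∧ (y : ℕ) = a) ∨
    (a ≤ (x : ℕ) ∧ (x : ℕ) + 1 = y ∧ (y : ℕ) < n - b) ∨
    ((x : ℕ) = n - b - 1 ∧ n - b ≤ (y : ℕ))

/-- `CP_{n,k}^s` : a path `v_1 ⋯ v_k` (at positions `0, …, k-1`) with all
`n - k` pendent vertices attached to `v_s` (position `s - 1`). -/
def cpOne (n k s : ℕ) : SimpleGraph (Fin n) :=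
  SimpleGraph.fromRel fun x y =>
    ((x : ℕ) + 1 = y ∧ (y : ℕ) < k) ∨ ((x : ℕ) = s - 1 ∧ k ≤ (y : ℕ))

/-- The caterpillar `CP(n; n_1, …, n_k)` : a path `v_1 ⋯ v_k` (at positions `0, …, k-1`),
where pendent vertex `j` (for `k ≤ j < n`) is attached to the path vertex at
position `f j` (so `n_i = |{j : f j = i - 1}|`). -/
def caterpillar (n k : ℕ) (f : ℕ → ℕ) : SimpleGraph (Fin n) :=
  SimpleGraph.fromRel fun x y =>
    ((x : ℕ) + 1 = y ∧ (y : ℕ) < k) ∨ (k ≤ (y : ℕ) ∧ (x : ℕ) = f y)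

/-- The balanced starlike tree `SP_{n,q}` : the center is vertex `0`, and vertex
`j ≥ 1` lies on branch `(j - 1) % q` at depth `(j - 1)/q + 1`; so the `q` branches are
paths whose orders pairwise differ by at most `1`. -/
def balancedStar (n q : ℕ) : SimpleGraph (Fin n) :=
  SimpleGraph.fromRel fun x y =>
    ((x : ℕ) = 0 ∧ 1 ≤ (y : ℕ) ∧ (y : ℕ) ≤ q) ∨ (1 ≤ (x : ℕ) ∧ (x : ℕ) + q = y)

/-- The edge-moving transformation of `G` w.r.t. the edge `uv`: contract `uv` to `u`
(moving all edges at `v` to `u`) and attach `v` to `u` as a pendent vertex. -/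
def edgeMove (G : SimpleGraph V) (u v : V) : SimpleGraph V :=
  SimpleGraph.fromRel fun x y =>
    (G.Adj x y ∧ x ≠ v ∧ y ≠ v) ∨ (x = u ∧ y = v) ∨ (x = u ∧ G.Adj v y ∧ y ≠ u)

section IsoInv
variable [Fintype V] [Fintype W] {G : SimpleGraph V} {H : SimpleGraph W}

theorem iso_dist_le {V W : Type*} {G : SimpleGraph V} {H : SimpleGraph W} (ψ : G ≃g H)
    (u v : V) : H.dist (ψ u) (ψ v) ≤ G.dist u v := by
    by_cases hr : G.Reachable u v
    · obtain ⟨p, hp⟩ := hr.exists_walk_length_eq_dist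
      calc H.dist (ψ u) (ψ v) ≤ (p.map ψ.toHom).length := SimpleGraph.dist_le _
        _ = G.dist u v := by rw [SimpleGraph.Walk.length_map, hp]
    · have hr' : ¬ H.Reachable (ψ u) (ψ v) := by
        intro h
        exact hr (by simpa using h.map ψ.symm.toHom)
      simp [SimpleGraph.dist_eq_zero_of_not_reachable hr']

theorem iso_dist_eq (φ : G ≃g H) (u v : V) : H.dist (φ u) (φ v) = G.dist u v := by
  refine le_antisymm (iso_dist_le φ u v) ?_
  have := iso_dist_le φ.symm (φ u) (φ v)
  simpa using this

theorem iso_side_eq (φ : G ≃g H) (u v : V) : side H (φ u) (φ v) = side G u v := by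
  unfold side
  refine Finset.card_nbij' (i := fun w => φ.symm w) (j := fun w => φ w) ?_ ?_ ?_ ?_
  · intro a ha
    simp only [Finset.mem_coe, Finset.mem_filter, Finset.mem_univ, true_and] at ha ⊢
    have h1 := iso_dist_eq φ.symm a (φ u)
    have h2 := iso_dist_eq φ.symm a (φ v)
    simp only [RelIso.symm_apply_apply] at h1 h2
    omega
  · intro a ha
    simp only [Finset.mem_coe, Finset.mem_filter, Finset.mem_univ, true_and] at ha ⊢
    have h1 := iso_dist_eq φ a u
    have h2 := iso_dist_eq φ a v
    omega
  · intro a _; simp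
  · intro a _; simp

theorem iso_mu_eq (φ : G ≃g H) (u v : V) : mu H (φ u) (φ v) = mu G u v := by
  unfold mu; rw [iso_side_eq φ, iso_side_eq φ]

theorem iso_r_eq (φ : G ≃g H) (i : ℕ) : r G i = r H i := by
  unfold r
  refine Finset.card_nbij' (i := fun e => Sym2.map φ e) (j := fun e => Sym2.map φ.symm e) ?_ ?_ ?_ ?_
  · intro e he
    induction e with
    | _ a b =>
      simp only [Finset.mem_coe, Finset.mem_filter, Finset.mem_univ, true_and,
        SimpleGraph.mem_edgeSet, Sym2.map_pair_eq] at he ⊢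
      refine ⟨(φ.map_adj_iff).2 he.1, ?_⟩
      show mu H (φ a) (φ b) = i
      rw [iso_mu_eq φ]
      exact he.2
  · intro e he
    induction e with
    | _ a b =>
      simp only [Finset.mem_coe, Finset.mem_filter, Finset.mem_univ, true_and,
        SimpleGraph.mem_edgeSet, Sym2.map_pair_eq] at he ⊢
      refine ⟨(φ.symm.map_adj_iff).2 he.1, ?_⟩
      show mu G (φ.symm a) (φ.symm b) = i
      rw [iso_mu_eq φ.symm]
      exact he.2
  · intro e _
    induction e with
    | _ a b => simp [Sym2.map_pair_eq]
  · intro e _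
    induction e with
    | _ a b => simp [Sym2.map_pair_eq]

end IsoInv

theorem card_filter_not {α : Type*} [Fintype α] [DecidableEq α] (p : α → Prop)
    [DecidablePred p] [DecidablePred fun a => ¬ p a] :
    (Finset.univ.filter fun a => ¬ p a).card = Fintype.card α - (Finset.univ.filter p).card := by
  have h := Finset.card_filter_add_card_filter_not
    (s := (Finset.univ : Finset α)) (p := p)
  rw [Finset.card_univ] at h
  omega

section Cat

variable {n k : ℕ} {f : ℕ → ℕ}

/-- position of a vertex -/
def pos (k : ℕ) (f : ℕ → ℕ) (x : ℕ) : ℕ := if x < k then x else f x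

theorem cat_adj_iff (hf : ∀ j, k ≤ j → j < n → f j < k) {x y : Fin n} :
    (caterpillar n k f).Adj x y ↔
      ((x : ℕ) + 1 = y ∧ (y : ℕ) < k) ∨ ((y : ℕ) + 1 = x ∧ (x : ℕ) < k) ∨
      (k ≤ (y : ℕ) ∧ (x : ℕ) = f y) ∨ (k ≤ (x : ℕ) ∧ (y : ℕ) = f x) := by
  rw [caterpillar, SimpleGraph.fromRel_adj]
  constructor
  · rintro ⟨hne, h | h⟩ <;> tauto
  · intro h
    have hxy : x ≠ y := by
      rcases h with ⟨h1, h2⟩ | ⟨h1, h2⟩ | ⟨h1, h2⟩ | ⟨h1, h2⟩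
      · intro he; omega
      · intro he; omega
      · have := hf y h1 y.isLt; intro he
        have hv : (x : ℕ) = (y : ℕ) := by rw [he]
        omega
      · have := hf x h1 x.isLt; intro he
        have hv : (x : ℕ) = (y : ℕ) := by rw [he]
        omega
    exact ⟨hxy, by tauto⟩

theorem adj_natdist_le (hf : ∀ j, k ≤ j → j < n → f j < k) {x y : Fin n}
    (h : (caterpillar n k f).Adj x y) :
    Nat.dist (pos k f x) (pos k f y) ≤ 1 := by
  rw [cat_adj_iff hf] at h
  simp only [pos, Nat.dist]
  rcases h with ⟨h1, h2⟩ | ⟨h1, h2⟩ | ⟨h1, h2⟩ | ⟨h1, h2⟩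
  · have hx : (x : ℕ) < k := by omega
    simp only [if_pos hx, if_pos h2]; omega
  · have hy : (y : ℕ) < k := by omega
    simp only [if_pos h2, if_pos hy]; omega
  · have hyk : ¬ ((y : ℕ) < k) := by omega
    have hfy := hf y h1 y.isLt
    have hx : (x : ℕ) < k := by omega
    simp only [if_pos hx, if_neg hyk]; omega
  · have hxk : ¬ ((x : ℕ) < k) := by omega
    have hfx := hf x h1 x.isLt
    have hy : (y : ℕ) < k := by omega
    simp only [if_neg hxk, if_pos hy]; omega

theorem walk_natdist_le (hf : ∀ j, k ≤ j → j < n → f j < k) {x y : Fin n}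
    (w : (caterpillar n k f).Walk x y) :
    Nat.dist (pos k f x) (pos k f y) ≤ w.length := by
  induction w with
  | nil => simp [Nat.dist_self]
  | cons h p ih =>
    calc Nat.dist (pos k f _) (pos k f _) ≤ _ + _ := Nat.dist.triangle_inequality _ _ _
    _ ≤ 1 + p.length := Nat.add_le_add (adj_natdist_le hf h) ih
    _ = _ := by simp [SimpleGraph.Walk.length_cons]; omega

theorem cat_connected (hk2 : 2 ≤ k) (hkn : k + 1 ≤ n)
    (hf : ∀ j, k ≤ j → j < n → f j < k) : (caterpillar n k f).Connected := by
  have hn : 0 < n := by omega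
  have reach0 : ∀ p (hp : p < k), (caterpillar n k f).Reachable ⟨0, hn⟩ ⟨p, by omega⟩ := by
    intro p
    induction p with
    | zero => intro _; rfl
    | succ q ih =>
      intro hp
      refine (ih (by omega)).trans ?_
      have : (caterpillar n k f).Adj ⟨q, by omega⟩ ⟨q + 1, by omega⟩ := by
        rw [cat_adj_iff hf]; left; exact ⟨rfl, hp⟩
      exact this.reachable
  have reachAll : ∀ x : Fin n, (caterpillar n k f).Reachable ⟨0, hn⟩ x := by
    intro x
    by_cases hx : (x : ℕ) < k
    · exact reach0 x hx
    · have hfx := hf x (by omega) x.isLt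
      refine (reach0 (f x) hfx).trans ?_
      have : (caterpillar n k f).Adj ⟨f x, by omega⟩ x := by
        rw [cat_adj_iff hf]; right; right; left; exact ⟨by omega, rfl⟩
      exact this.reachable
  rw [SimpleGraph.connected_iff]
  exact ⟨fun x y => (reachAll x).symm.trans (reachAll y), ⟨⟨0, hn⟩⟩⟩


theorem dist_ge_natdist (hk2 : 2 ≤ k) (hkn : k + 1 ≤ n)
    (hf : ∀ j, k ≤ j → j < n → f j < k) (x y : Fin n) :
    Nat.dist (pos k f x) (pos k f y) ≤ (caterpillar n k f).dist x y := by
  obtain ⟨w, hw⟩ := (cat_connected hk2 hkn hf).exists_walk_length_eq_dist x y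
  rw [← hw]
  exact walk_natdist_le hf w

theorem dist_pendant (hk2 : 2 ≤ k) (hkn : k + 1 ≤ n)
    (hf : ∀ j, k ≤ j → j < n → f j < k) {x j : Fin n} (hj : k ≤ (j : ℕ)) (hxj : x ≠ j) :
    (caterpillar n k f).dist x j =
      (caterpillar n k f).dist x ⟨f j, by have := hf j hj j.isLt; omega⟩ + 1 := by
  have hconn := cat_connected hk2 hkn hf
  have hfj : f (j : ℕ) < k := hf j hj j.isLt
  set a : Fin n := ⟨f j, by omega⟩ with ha
  have hadj : (caterpillar n k f).Adj a j := by
    rw [cat_adj_iff hf]; right; right; left; exact ⟨hj, rfl⟩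
  have hub : (caterpillar n k f).dist x j ≤ (caterpillar n k f).dist x a + 1 := by
    have := hconn.dist_triangle (u := x) (v := a) (w := j)
    have h1 : (caterpillar n k f).dist a j = 1 := SimpleGraph.dist_eq_one_iff_adj.2 hadj
    omega
  have hlb : (caterpillar n k f).dist x a + 1 ≤ (caterpillar n k f).dist x j := by
    obtain ⟨w, hw⟩ := hconn.exists_walk_length_eq_dist x j
    have hne : ∀ b (h : (caterpillar n k f).Adj j b), b = a := by
      intro b h
      rw [cat_adj_iff hf] at h
      apply Fin.ext
      show (b : ℕ) = f (j : ℕ)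
      rcases h with ⟨h1, h2⟩ | ⟨h1, h2⟩ | ⟨h1, h2⟩ | ⟨h1, h2⟩
      · omega
      · omega
      · have := hf b h1 b.isLt; omega
      · omega
    have hdpos : 0 < (caterpillar n k f).dist x j := hconn.pos_dist_of_ne hxj
    have hnil : ¬ w.reverse.Nil := by
      rw [SimpleGraph.Walk.nil_iff_length_eq, SimpleGraph.Walk.length_reverse]
      omega
    have hadj1 := w.reverse.adj_snd hnil
    have hb : w.reverse.getVert 1 = a := hne _ hadj1
    have hd := SimpleGraph.dist_le w.reverse.tail
    have hda : (caterpillar n k f).dist a x ≤ w.reverse.tail.length := by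
      rw [← hb]; exact hd
    have hlen := SimpleGraph.Walk.length_tail_add_one hnil
    rw [SimpleGraph.Walk.length_reverse] at hlen
    rw [SimpleGraph.dist_comm (u := x) (v := a)]
    omega
  omega

theorem dist_path_aux (hk2 : 2 ≤ k) (hkn : k + 1 ≤ n)
    (hf : ∀ j, k ≤ j → j < n → f j < k) :
    ∀ d p (h : p + d < k),
      (caterpillar n k f).dist ⟨p, by omega⟩ ⟨p + d, by omega⟩ ≤ d := by
  intro d
  induction d with
  | zero => intro p h; simp
  | succ e ih =>
    intro p h
    have hconn := cat_connected hk2 hkn hf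
    have h1 : (caterpillar n k f).Adj (⟨p + e, by omega⟩ : Fin n) ⟨p + e + 1, by omega⟩ := by
      rw [cat_adj_iff hf]; left; exact ⟨rfl, by show p + e + 1 < k; omega⟩
    have h2 : (caterpillar n k f).dist (⟨p + e, by omega⟩ : Fin n) ⟨p + e + 1, by omega⟩ = 1 :=
      SimpleGraph.dist_eq_one_iff_adj.2 h1
    have h3 := hconn.dist_triangle (u := (⟨p, by omega⟩ : Fin n))
      (v := ⟨p + e, by omega⟩) (w := ⟨p + e + 1, by omega⟩)
    have h4 := ih p (by omega)
    have : (⟨p + (e+1), by omega⟩ : Fin n) = ⟨p + e + 1, by omega⟩ := by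
      apply Fin.ext; simp; omega
    rw [this]
    omega

theorem dist_path (hk2 : 2 ≤ k) (hkn : k + 1 ≤ n)
    (hf : ∀ j, k ≤ j → j < n → f j < k) {p q : ℕ} (hp : p < k) (hq : q < k) :
    (caterpillar n k f).dist ⟨p, by omega⟩ ⟨q, by omega⟩ = Nat.dist p q := by
  have hle : ∀ {p q : ℕ} (hp : p < k) (hq : q < k), p ≤ q →
      (caterpillar n k f).dist ⟨p, by omega⟩ ⟨q, by omega⟩ ≤ q - p := by
    intro p q hp hq hpq
    have := dist_path_aux hk2 hkn hf (q - p) p (by omega)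
    have he : (⟨p + (q - p), by omega⟩ : Fin n) = ⟨q, by omega⟩ := by
      apply Fin.ext; simp; omega
    rwa [he] at this
  have hge := dist_ge_natdist hk2 hkn hf (⟨p, by omega⟩ : Fin n) ⟨q, by omega⟩
  have hpos : pos k f p = p := if_pos hp
  have hpos' : pos k f q = q := if_pos hq
  simp only [hpos, hpos'] at hge
  rcases le_or_gt p q with hh | hh
  · have := hle hp hq hh
    have hd : Nat.dist p q = q - p := Nat.dist_eq_sub_of_le hh
    omega
  · have := hle hq hp (by omega)
    rw [SimpleGraph.dist_comm] at this
    have hd : Nat.dist p q = p - q := Nat.dist_eq_sub_of_le_right (by omega)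
    omega

theorem dist_formula (hk2 : 2 ≤ k) (hkn : k + 1 ≤ n)
    (hf : ∀ j, k ≤ j → j < n → f j < k) {x y : Fin n} (hxy : x ≠ y) :
    (caterpillar n k f).dist x y = Nat.dist (pos k f x) (pos k f y)
      + (if (x : ℕ) < k then 0 else 1) + (if (y : ℕ) < k then 0 else 1) := by
  by_cases hx : (x : ℕ) < k <;> by_cases hy : (y : ℕ) < k
  · have hxx : x = ⟨(x : ℕ), by omega⟩ := rfl
    have hyy : y = ⟨(y : ℕ), by omega⟩ := rfl
    rw [hxx, hyy, dist_path hk2 hkn hf hx hy]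
    simp [pos, if_pos hx, if_pos hy]
  · -- x path, y pendant
    have hfy : f (y : ℕ) < k := hf y (by omega) y.isLt
    rw [dist_pendant hk2 hkn hf (by omega : k ≤ (y : ℕ)) hxy]
    have hxx : x = ⟨(x : ℕ), by omega⟩ := rfl
    rw [hxx, dist_path hk2 hkn hf hx hfy]
    simp only [pos, if_pos hx, if_neg hy]
    try omega
  · -- x pendant, y path
    have hfx : f (x : ℕ) < k := hf x (by omega) x.isLt
    rw [SimpleGraph.dist_comm, dist_pendant hk2 hkn hf (by omega : k ≤ (x : ℕ)) hxy.symm]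
    have hyy : y = ⟨(y : ℕ), by omega⟩ := rfl
    rw [hyy, dist_path hk2 hkn hf hy hfx]
    simp only [pos, if_neg hx, if_pos hy]
    try rw [Nat.dist_comm]
    try omega
  · -- both pendants
    have hfx : f (x : ℕ) < k := hf x (by omega) x.isLt
    have hfy : f (y : ℕ) < k := hf y (by omega) y.isLt
    rw [dist_pendant hk2 hkn hf (by omega : k ≤ (y : ℕ)) hxy]
    have hxa : x ≠ ⟨f (y : ℕ), by omega⟩ := by
      intro he
      have : (x : ℕ) = f (y : ℕ) := by rw [he]
      omega
    rw [SimpleGraph.dist_comm, dist_pendant hk2 hkn hf (by omega : k ≤ (x : ℕ)) (Ne.symm hxa)]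
    have haa : (⟨f (y : ℕ), by omega⟩ : Fin n) = ⟨f (y : ℕ), by omega⟩ := rfl
    rw [dist_path hk2 hkn hf hfy hfx]
    simp only [pos, if_neg hx, if_neg hy]
    try rw [Nat.dist_comm]
    try omega


noncomputable def Acnt (n k : ℕ) (f : ℕ → ℕ) (t : ℕ) : ℕ :=
  ((Finset.Ico k n).filter fun j => f j < t).card

theorem card_filter_fin (n : ℕ) (p : ℕ → Prop) [DecidablePred p] :
    ((Finset.univ : Finset (Fin n)).filter fun w => p w.val).card
      = ((Finset.range n).filter p).card := by
  refine Finset.card_bij (i := fun w _ => w.val) ?_ ?_ ?_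
  · intro a ha
    simp only [Finset.mem_filter, Finset.mem_univ, true_and] at ha
    simp only [Finset.mem_filter, Finset.mem_range]
    exact ⟨a.isLt, ha⟩
  · intro a _ b _ h
    exact Fin.ext h
  · intro b hb
    simp only [Finset.mem_filter, Finset.mem_range] at hb
    exact ⟨⟨b, hb.1⟩, by simp only [Finset.mem_filter, Finset.mem_univ, true_and]; exact hb.2, rfl⟩

theorem cardPos (hkn : k + 1 ≤ n) (t : ℕ) (ht : t ≤ k) :
    ((Finset.univ : Finset (Fin n)).filter fun w => pos k f w.val < t).card
      = t + Acnt n k f t := by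
  rw [card_filter_fin n (fun a => pos k f a < t)]
  have hsplit : (Finset.range n).filter (fun a => pos k f a < t)
      = ((Finset.range k).filter fun a => a < t) ∪ ((Finset.Ico k n).filter fun j => f j < t) := by
    ext a
    simp only [Finset.mem_filter, Finset.mem_range, Finset.mem_union, Finset.mem_Ico]
    simp only [pos]
    by_cases hak : a < k
    · simp only [if_pos hak]
      constructor
      · intro hh; left; exact ⟨hak, hh.2⟩
      · intro hh
        rcases hh with ⟨h1, h2⟩ | ⟨⟨h1, h2⟩, h3⟩
        · exact ⟨by omega, h2⟩
        · omega
    · simp only [if_neg hak]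
      constructor
      · intro hh; right; exact ⟨⟨by omega, hh.1⟩, hh.2⟩
      · intro hh
        rcases hh with ⟨h1, h2⟩ | ⟨⟨h1, h2⟩, h3⟩
        · omega
        · exact ⟨h2, h3⟩
  rw [hsplit, Finset.card_union_of_disjoint, Acnt]
  · congr 1
    have : (Finset.range k).filter (fun a => a < t) = Finset.range t := by
      ext a
      simp only [Finset.mem_filter, Finset.mem_range]
      omega
    rw [this, Finset.card_range]
  · rw [Finset.disjoint_left]
    intro a ha hb
    simp only [Finset.mem_filter, Finset.mem_range, Finset.mem_Ico] at ha hb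
    omega


theorem dist_lt_path (hk2 : 2 ≤ k) (hkn : k + 1 ≤ n)
    (hf : ∀ j, k ≤ j → j < n → f j < k) {t : ℕ} (h1 : 1 ≤ t) (h2 : t < k) (w : Fin n) :
    ((caterpillar n k f).dist w ⟨t - 1, by omega⟩ < (caterpillar n k f).dist w ⟨t, by omega⟩
        ↔ pos k f w.val < t)
    ∧ ((caterpillar n k f).dist w ⟨t, by omega⟩ < (caterpillar n k f).dist w ⟨t - 1, by omega⟩
        ↔ ¬ pos k f w.val < t) := by
  set u : Fin n := ⟨t - 1, by omega⟩ with hu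
  set v : Fin n := ⟨t, by omega⟩ with hv
  have huval : (u : ℕ) = t - 1 := rfl
  have hvval : (v : ℕ) = t := rfl
  have hadj : (caterpillar n k f).Adj u v := by
    rw [cat_adj_iff hf]; left
    refine ⟨?_, ?_⟩
    · rw [huval, hvval]; omega
    · rw [hvval]; omega
  have hd1 : (caterpillar n k f).dist u v = 1 := SimpleGraph.dist_eq_one_iff_adj.2 hadj
  have hd2 : (caterpillar n k f).dist v u = 1 := SimpleGraph.dist_eq_one_iff_adj.2 hadj.symm
  by_cases hw1 : w = u
  · subst hw1
    rw [SimpleGraph.dist_self, hd1]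
    have hh : pos k f (u : ℕ) = t - 1 := by
      rw [huval, pos, if_pos (by omega : t - 1 < k)]
    rw [hh]
    refine ⟨?_, ?_⟩ <;> constructor <;> intro <;> omega
  by_cases hw2 : w = v
  · subst hw2
    rw [SimpleGraph.dist_self, hd2]
    have hh : pos k f (v : ℕ) = t := by
      rw [hvval, pos, if_pos (by omega : t < k)]
    rw [hh]
    refine ⟨?_, ?_⟩ <;> constructor <;> intro <;> omega
  · rw [dist_formula hk2 hkn hf hw1, dist_formula hk2 hkn hf hw2]
    have hpu : pos k f (u : ℕ) = t - 1 := by rw [huval, pos, if_pos (by omega : t - 1 < k)]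
    have hpv : pos k f (v : ℕ) = t := by rw [hvval, pos, if_pos (by omega : t < k)]
    rw [hpu, hpv, huval, hvval, if_pos (by omega : t - 1 < k), if_pos (by omega : t < k)]
    simp only [Nat.dist]
    constructor <;> constructor <;> intro hh <;> omega

theorem side_path (hk2 : 2 ≤ k) (hkn : k + 1 ≤ n)
    (hf : ∀ j, k ≤ j → j < n → f j < k) {t : ℕ} (h1 : 1 ≤ t) (h2 : t < k) :
    side (caterpillar n k f) ⟨t - 1, by omega⟩ ⟨t, by omega⟩ = t + Acnt n k f t
    ∧ side (caterpillar n k f) ⟨t, by omega⟩ ⟨t - 1, by omega⟩ = n - (t + Acnt n k f t) := by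
  have hcong1 : (Finset.univ.filter fun w : Fin n =>
      (caterpillar n k f).dist w ⟨t - 1, by omega⟩ < (caterpillar n k f).dist w ⟨t, by omega⟩)
      = Finset.univ.filter fun w : Fin n => pos k f w.val < t :=
    Finset.filter_congr fun w _ => (dist_lt_path hk2 hkn hf h1 h2 w).1
  have hcong2 : (Finset.univ.filter fun w : Fin n =>
      (caterpillar n k f).dist w ⟨t, by omega⟩ < (caterpillar n k f).dist w ⟨t - 1, by omega⟩)
      = Finset.univ.filter fun w : Fin n => ¬ pos k f w.val < t :=
    Finset.filter_congr fun w _ => (dist_lt_path hk2 hkn hf h1 h2 w).2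
  have hP := cardPos (f := f) hkn t (by omega)
  constructor
  · unfold side; rw [hcong1, hP]
  · unfold side; rw [hcong2, card_filter_not, hP, Fintype.card_fin]

theorem mu_path (hk2 : 2 ≤ k) (hkn : k + 1 ≤ n)
    (hf : ∀ j, k ≤ j → j < n → f j < k) {t : ℕ} (h1 : 1 ≤ t) (h2 : t < k) :
    mu (caterpillar n k f) ⟨t - 1, by omega⟩ ⟨t, by omega⟩
      = min (t + Acnt n k f t) (n - (t + Acnt n k f t)) := by
  unfold mu
  rw [(side_path hk2 hkn hf h1 h2).1, (side_path hk2 hkn hf h1 h2).2]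

theorem dist_lt_pend (hk2 : 2 ≤ k) (hkn : k + 1 ≤ n)
    (hf : ∀ j, k ≤ j → j < n → f j < k) {j : Fin n} (hj : k ≤ (j : ℕ)) (w : Fin n) :
    ((caterpillar n k f).dist w j
        < (caterpillar n k f).dist w ⟨f (j : ℕ), by have := hf j hj j.isLt; omega⟩
      ↔ w = j)
    ∧ ((caterpillar n k f).dist w ⟨f (j : ℕ), by have := hf j hj j.isLt; omega⟩
        < (caterpillar n k f).dist w j ↔ ¬ w = j) := by
  have hfj : f (j : ℕ) < k := hf j hj j.isLt
  set a : Fin n := ⟨f (j : ℕ), by omega⟩ with ha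
  have hcoe : ∀ (h : f (j : ℕ) < n), (⟨f (j : ℕ), h⟩ : Fin n) = a := fun _ => rfl
  have hadj : (caterpillar n k f).Adj a j := by
    rw [cat_adj_iff hf]; right; right; left; exact ⟨hj, rfl⟩
  suffices hsuff : ((caterpillar n k f).dist w j < (caterpillar n k f).dist w a ↔ w = j)
      ∧ ((caterpillar n k f).dist w a < (caterpillar n k f).dist w j ↔ ¬ w = j) by
    exact hsuff
  by_cases hw : w = j
  · rw [hw, SimpleGraph.dist_self]
    have hd : (caterpillar n k f).dist j a = 1 := SimpleGraph.dist_eq_one_iff_adj.2 hadj.symm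
    rw [hd]
    refine ⟨?_, ?_⟩ <;> simp
  · have hd : (caterpillar n k f).dist w j = (caterpillar n k f).dist w a + 1 :=
      dist_pendant hk2 hkn hf hj hw
    rw [hd]
    refine ⟨?_, ?_⟩ <;> constructor <;> intro hh
    · exact absurd hh (by omega)
    · exact absurd hh hw
    · exact hw
    · omega

theorem side_pend (hk2 : 2 ≤ k) (hkn : k + 1 ≤ n)
    (hf : ∀ j, k ≤ j → j < n → f j < k) {j : Fin n} (hj : k ≤ (j : ℕ)) :
    side (caterpillar n k f) j ⟨f (j : ℕ), by have := hf j hj j.isLt; omega⟩ = 1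
    ∧ side (caterpillar n k f) ⟨f (j : ℕ), by have := hf j hj j.isLt; omega⟩ j = n - 1 := by
  have hfj : f (j : ℕ) < k := hf j hj j.isLt
  have hcong1 : (Finset.univ.filter fun w : Fin n =>
      (caterpillar n k f).dist w j < (caterpillar n k f).dist w ⟨f (j : ℕ), by omega⟩)
      = Finset.univ.filter fun w : Fin n => w = j :=
    Finset.filter_congr fun w _ => (dist_lt_pend hk2 hkn hf hj w).1
  have hcong2 : (Finset.univ.filter fun w : Fin n =>
      (caterpillar n k f).dist w ⟨f (j : ℕ), by omega⟩ < (caterpillar n k f).dist w j)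
      = Finset.univ.filter fun w : Fin n => ¬ w = j :=
    Finset.filter_congr fun w _ => (dist_lt_pend hk2 hkn hf hj w).2
  have h1 : (Finset.univ.filter fun w : Fin n => w = j).card = 1 := by
    rw [Finset.filter_eq']
    simp
  constructor
  · unfold side; rw [hcong1, h1]
  · unfold side; rw [hcong2, card_filter_not, h1, Fintype.card_fin]

theorem mu_pend (hk2 : 2 ≤ k) (hkn : k + 1 ≤ n)
    (hf : ∀ j, k ≤ j → j < n → f j < k) {j : Fin n} (hj : k ≤ (j : ℕ)) :
    mu (caterpillar n k f) ⟨f (j : ℕ), by have := hf j hj j.isLt; omega⟩ j = 1 := by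
  unfold mu
  rw [(side_pend hk2 hkn hf hj).2, (side_pend hk2 hkn hf hj).1]
  omega


theorem muE_mk {V : Type*} [Fintype V] (G : SimpleGraph V) (a b : V) :
    muE G s(a, b) = mu G a b := rfl

noncomputable def gFun (n k : ℕ) (f : ℕ → ℕ) (t : ℕ) : ℕ :=
  if t < k then min (t + Acnt n k f t) (n - (t + Acnt n k f t)) else 1

theorem r_eq (hk2 : 2 ≤ k) (hkn : k + 1 ≤ n)
    (hf : ∀ j, k ≤ j → j < n → f j < k) (m : ℕ) :
    r (caterpillar n k f) m = ((Finset.Ico 1 n).filter fun t => gFun n k f t = m).card := by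
  unfold r
  symm
  refine Finset.card_bij (i := fun t ht =>
    if htk : t < k then
      s((⟨t - 1, by
          have := (Finset.mem_Ico.1 (Finset.mem_of_mem_filter t ht)); omega⟩ : Fin n),
        (⟨t, by
          have := (Finset.mem_Ico.1 (Finset.mem_of_mem_filter t ht)); omega⟩ : Fin n))
    else
      s((⟨f t, by
          have h2 := (Finset.mem_Ico.1 (Finset.mem_of_mem_filter t ht))
          have := hf t (by omega) (by omega); omega⟩ : Fin n),
        (⟨t, by
          have := (Finset.mem_Ico.1 (Finset.mem_of_mem_filter t ht)); omega⟩ : Fin n)))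
    ?_ ?_ ?_
  · intro t ht
    have hmem := Finset.mem_filter.1 ht
    have hio := Finset.mem_Ico.1 hmem.1
    have hg := hmem.2
    simp only [Finset.mem_filter, Finset.mem_univ, true_and]
    by_cases htk : t < k
    · rw [dif_pos htk]
      constructor
      · rw [SimpleGraph.mem_edgeSet, cat_adj_iff hf]
        left
        exact ⟨by show t - 1 + 1 = t; omega, by show t < k; omega⟩
      · rw [muE_mk]
        have hmp : mu (caterpillar n k f) (⟨t - 1, by omega⟩ : Fin n) (⟨t, by omega⟩ : Fin n)
            = min (t + Acnt n k f t) (n - (t + Acnt n k f t)) :=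
          mu_path hk2 hkn hf (by omega) htk
        rw [hmp]
        rw [gFun, if_pos htk] at hg
        exact hg
    · rw [dif_neg htk]
      have hfk : f t < k := hf t (by omega) (by omega)
      constructor
      · rw [SimpleGraph.mem_edgeSet, cat_adj_iff hf]
        right; right; left
        exact ⟨by show k ≤ t; omega, by show f t = f t; rfl⟩
      · rw [muE_mk]
        have hmp : mu (caterpillar n k f) (⟨f t, by omega⟩ : Fin n) (⟨t, by omega⟩ : Fin n) = 1 := by
          have := mu_pend (j := (⟨t, by omega⟩ : Fin n)) hk2 hkn hf (by show k ≤ t; omega)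
          exact this
        rw [hmp]
        rw [gFun, if_neg htk] at hg
        exact hg.symm ▸ rfl
  · intro t1 ht1 t2 ht2 heq
    have h1 := Finset.mem_Ico.1 (Finset.mem_of_mem_filter _ ht1)
    have h2 := Finset.mem_Ico.1 (Finset.mem_of_mem_filter _ ht2)
    by_cases ha : t1 < k <;> by_cases hb : t2 < k
    · rw [dif_pos ha, dif_pos hb, Sym2.eq_iff] at heq
      rcases heq with ⟨e1, e2⟩ | ⟨e1, e2⟩ <;>
        [skip; skip] <;>
        · have v1 := congrArg Fin.val e1
          have v2 := congrArg Fin.val e2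
          simp only [] at v1 v2
          omega
    · rw [dif_pos ha, dif_neg hb, Sym2.eq_iff] at heq
      have hfk : f t2 < k := hf t2 (by omega) (by omega)
      rcases heq with ⟨e1, e2⟩ | ⟨e1, e2⟩ <;>
        · have v1 := congrArg Fin.val e1
          have v2 := congrArg Fin.val e2
          simp only [] at v1 v2
          omega
    · rw [dif_neg ha, dif_pos hb, Sym2.eq_iff] at heq
      have hfk : f t1 < k := hf t1 (by omega) (by omega)
      rcases heq with ⟨e1, e2⟩ | ⟨e1, e2⟩ <;>
        · have v1 := congrArg Fin.val e1
          have v2 := congrArg Fin.val e2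
          simp only [] at v1 v2
          omega
    · rw [dif_neg ha, dif_neg hb, Sym2.eq_iff] at heq
      have hfk1 : f t1 < k := hf t1 (by omega) (by omega)
      have hfk2 : f t2 < k := hf t2 (by omega) (by omega)
      rcases heq with ⟨e1, e2⟩ | ⟨e1, e2⟩ <;>
        · have v1 := congrArg Fin.val e1
          have v2 := congrArg Fin.val e2
          simp only [] at v1 v2
          omega
  · intro e he
    simp only [Finset.mem_filter, Finset.mem_univ, true_and] at he
    obtain ⟨hesg, hemu⟩ := he
    induction e with
    | _ x y =>
      rw [SimpleGraph.mem_edgeSet, cat_adj_iff hf] at hesg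
      rcases hesg with ⟨hxy, hyk⟩ | ⟨hyx, hxk⟩ | ⟨hky, hxf⟩ | ⟨hkx, hyf⟩
      · -- x + 1 = y, y < k : t = ↑y
        have hxeq : x = (⟨(y : ℕ) - 1, by omega⟩ : Fin n) := Fin.ext (by show (x:ℕ) = (y:ℕ) - 1; omega)
        have htm : (y : ℕ) ∈ (Finset.Ico 1 n).filter fun t => gFun n k f t = m := by
          rw [Finset.mem_filter, Finset.mem_Ico]
          refine ⟨⟨by omega, y.isLt⟩, ?_⟩
          rw [gFun, if_pos hyk]
          rw [← hemu, hxeq]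
          have hmp : mu (caterpillar n k f) (⟨(y:ℕ) - 1, by omega⟩ : Fin n) (⟨(y:ℕ), y.isLt⟩ : Fin n)
              = min ((y:ℕ) + Acnt n k f (y:ℕ)) (n - ((y:ℕ) + Acnt n k f (y:ℕ))) :=
            mu_path hk2 hkn hf (by omega) hyk
          rw [show s((⟨(y:ℕ) - 1, by omega⟩ : Fin n), y) = s((⟨(y:ℕ) - 1, by omega⟩ : Fin n), (⟨(y:ℕ), y.isLt⟩ : Fin n)) from rfl]
          rw [muE_mk, hmp]
        refine ⟨(y : ℕ), htm, ?_⟩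
        rw [dif_pos hyk, hxeq]
      · -- y + 1 = x, x < k : t = ↑x
        have hyeq : y = (⟨(x : ℕ) - 1, by omega⟩ : Fin n) := Fin.ext (by show (y:ℕ) = (x:ℕ) - 1; omega)
        have htm : (x : ℕ) ∈ (Finset.Ico 1 n).filter fun t => gFun n k f t = m := by
          rw [Finset.mem_filter, Finset.mem_Ico]
          refine ⟨⟨by omega, x.isLt⟩, ?_⟩
          rw [gFun, if_pos hxk]
          rw [← hemu, hyeq]
          have hmp : mu (caterpillar n k f) (⟨(x:ℕ) - 1, by omega⟩ : Fin n) (⟨(x:ℕ), x.isLt⟩ : Fin n)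
              = min ((x:ℕ) + Acnt n k f (x:ℕ)) (n - ((x:ℕ) + Acnt n k f (x:ℕ))) :=
            mu_path hk2 hkn hf (by omega) hxk
          rw [show s((⟨(x:ℕ), x.isLt⟩ : Fin n), (⟨(x:ℕ) - 1, by omega⟩ : Fin n)) = s((⟨(x:ℕ) - 1, by omega⟩ : Fin n), (⟨(x:ℕ), x.isLt⟩ : Fin n)) from Sym2.eq_swap]
          rw [muE_mk, hmp]
        refine ⟨(x : ℕ), htm, ?_⟩
        rw [dif_pos hxk, hyeq]
        exact Sym2.eq_swap
      · -- k ≤ y, x = f y : t = ↑y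
        have hfk : f (y : ℕ) < k := hf y hky y.isLt
        have hxeq : x = (⟨f (y : ℕ), by omega⟩ : Fin n) := Fin.ext (by show (x:ℕ) = f (y:ℕ); omega)
        have htm : (y : ℕ) ∈ (Finset.Ico 1 n).filter fun t => gFun n k f t = m := by
          rw [Finset.mem_filter, Finset.mem_Ico]
          refine ⟨⟨by omega, y.isLt⟩, ?_⟩
          rw [gFun, if_neg (by omega)]
          rw [← hemu, hxeq]
          have hmp : mu (caterpillar n k f) (⟨f (y:ℕ), by omega⟩ : Fin n) y = 1 :=
            mu_pend hk2 hkn hf hky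
          rw [muE_mk, hmp]
        refine ⟨(y : ℕ), htm, ?_⟩
        rw [dif_neg (by omega : ¬ (y : ℕ) < k)]
        exact (congrArg (fun z => s(z, y)) hxeq).symm
      · -- k ≤ x, y = f x : t = ↑x
        have hfk : f (x : ℕ) < k := hf x hkx x.isLt
        have hyeq : y = (⟨f (x : ℕ), by omega⟩ : Fin n) := Fin.ext (by show (y:ℕ) = f (x:ℕ); omega)
        have htm : (x : ℕ) ∈ (Finset.Ico 1 n).filter fun t => gFun n k f t = m := by
          rw [Finset.mem_filter, Finset.mem_Ico]
          refine ⟨⟨by omega, x.isLt⟩, ?_⟩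
          rw [gFun, if_neg (by omega)]
          rw [← hemu, hyeq]
          have hmp : mu (caterpillar n k f) (⟨f (x:ℕ), by omega⟩ : Fin n) x = 1 :=
            mu_pend hk2 hkn hf hkx
          rw [show s(x, (⟨f (x:ℕ), by omega⟩ : Fin n)) = s((⟨f (x:ℕ), by omega⟩ : Fin n), x) from Sym2.eq_swap]
          rw [muE_mk, hmp]
        refine ⟨(x : ℕ), htm, ?_⟩
        rw [dif_neg (by omega : ¬ (x : ℕ) < k)]
        exact ((congrArg (fun z => s(z, x)) hyeq).symm).trans Sym2.eq_swap


theorem cpOne_eq_caterpillar (n k s : ℕ) :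
    cpOne n k s = caterpillar n k (fun _ => s - 1) := by
  unfold cpOne caterpillar
  congr 1
  funext x y
  apply propext
  constructor
  · rintro (⟨h1, h2⟩ | ⟨h1, h2⟩)
    · exact Or.inl ⟨h1, h2⟩
    · exact Or.inr ⟨h2, h1⟩
  · rintro (⟨h1, h2⟩ | ⟨h1, h2⟩)
    · exact Or.inl ⟨h1, h2⟩
    · exact Or.inr ⟨h2, h1⟩

theorem Acnt_const (hkn : k ≤ n) (c t : ℕ) :
    Acnt n k (fun _ => c) t = if c < t then n - k else 0 := by
  unfold Acnt
  by_cases h : c < t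
  · rw [if_pos h, Finset.filter_true_of_mem fun _ _ => h, Nat.card_Ico]
  · rw [if_neg h, Finset.filter_false_of_mem fun _ _ => h, Finset.card_empty]

theorem gOne_eq (hk2 : 2 ≤ k) (hkn : k + 1 ≤ n) {t : ℕ} (h1 : 1 ≤ t) (h2 : t < k) :
    gFun n k (fun _ => (k + 1) / 2 - 1) t = min t (k - t) := by
  rw [gFun, if_pos h2, Acnt_const (by omega)]
  split_ifs with h <;> omega

theorem Acnt_le (hkn : k + 1 ≤ n) (t : ℕ) : Acnt n k f t ≤ n - k := by
  calc Acnt n k f t ≤ (Finset.Ico k n).card := Finset.card_filter_le _ _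
  _ = n - k := Nat.card_Ico _ _

theorem g_bounds (hk2 : 2 ≤ k) (hkn : k + 1 ≤ n) {t : ℕ} (h1 : 1 ≤ t) (h2 : t < n) :
    1 ≤ gFun n k (fun _ => (k + 1) / 2 - 1) t
    ∧ gFun n k (fun _ => (k + 1) / 2 - 1) t ≤ gFun n k f t
    ∧ gFun n k f t ≤ n / 2 := by
  have hA := Acnt_le (f := f) hkn t
  by_cases htk : t < k
  · rw [gOne_eq hk2 hkn h1 htk, gFun, if_pos htk]
    omega
  · rw [gFun, if_neg htk, gFun, if_neg htk]
    omega

theorem tailSum_eq (hk2 : 2 ≤ k) (hkn : k + 1 ≤ n)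
    (hf : ∀ j, k ≤ j → j < n → f j < k) (m : ℕ) :
    tailSum (caterpillar n k f) n m
      = ((Finset.Ico 1 n).filter fun t => gFun n k f t ∈ Finset.Icc m (n / 2)).card := by
  unfold tailSum
  rw [Finset.sum_congr rfl fun i _ => r_eq hk2 hkn hf i]
  exact Finset.sum_card_fiberwise_eq_card_filter (Finset.Ico 1 n) (Finset.Icc m (n / 2))
    (gFun n k f)

theorem sum_mul_card (I A : Finset ℕ) (g : ℕ → ℕ) (h : ∀ t ∈ A, g t ∈ I) :
    ∑ i ∈ I, i * (A.filter fun t => g t = i).card = ∑ t ∈ A, g t := by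
  have h1 := Finset.sum_fiberwise_eq_sum_filter A I g g
  rw [Finset.filter_true_of_mem h] at h1
  rw [← h1]
  refine Finset.sum_congr rfl fun i _ => ?_
  rw [Finset.sum_congr rfl fun t ht => (Finset.mem_filter.1 ht).2, Finset.sum_const,
    smul_eq_mul]
  ring

theorem graph_eq_of_f_eq {f' : ℕ → ℕ} (h : ∀ j, k ≤ j → j < n → f j = f' j) :
    caterpillar n k f = caterpillar n k f' := by
  unfold caterpillar
  congr 1
  funext x y
  have hy := fun hk => h (y : ℕ) hk y.isLt
  apply propext
  constructor
  · rintro (⟨h1, h2⟩ | ⟨h1, h2⟩)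
    · exact Or.inl ⟨h1, h2⟩
    · exact Or.inr ⟨h1, by rw [← hy h1]; exact h2⟩
  · rintro (⟨h1, h2⟩ | ⟨h1, h2⟩)
    · exact Or.inl ⟨h1, h2⟩
    · exact Or.inr ⟨h1, by rw [hy h1]; exact h2⟩

theorem g_eq_of_f_const (hk2 : 2 ≤ k) (hkn : k + 1 ≤ n)
    (hf : ∀ j, k ≤ j → j < n → f j < k)
    (heq : ∀ t, 1 ≤ t → t < n → gFun n k f t = gFun n k (fun _ => (k + 1) / 2 - 1) t) :
    (∀ j, k ≤ j → j < n → f j = (k + 1) / 2 - 1)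
    ∨ (k % 2 = 0 ∧ ∀ j, k ≤ j → j < n → f j = (k + 1) / 2) := by
  have hmin : ∀ t, 1 ≤ t → t < k →
      min (t + Acnt n k f t) (n - (t + Acnt n k f t)) = min t (k - t) := by
    intro t h1 h2
    have := heq t h1 (by omega)
    rw [gFun, if_pos h2, gOne_eq hk2 hkn h1 h2] at this
    exact this
  have hA0 : ∀ t, 1 ≤ t → 2 * t < k → Acnt n k f t = 0 := by
    intro t h1 h2
    have hm := hmin t h1 (by omega)
    have hA := Acnt_le (f := f) hkn t
    omega
  have hAfull : ∀ t, t < k → k < 2 * t → Acnt n k f t = n - k := by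
    intro t h1 h2
    have hm := hmin t (by omega) h1
    have hA := Acnt_le (f := f) hkn t
    omega
  have hnone : ∀ t, Acnt n k f t = 0 → ∀ j, k ≤ j → j < n → ¬ f j < t := by
    intro t h j hj1 hj2 hlt
    have hmem : j ∈ (Finset.Ico k n).filter fun j => f j < t :=
      Finset.mem_filter.2 ⟨Finset.mem_Ico.2 ⟨hj1, hj2⟩, hlt⟩
    rw [Finset.card_eq_zero.1 h] at hmem
    exact absurd hmem (Finset.notMem_empty j)
  have hall : ∀ t, Acnt n k f t = n - k → ∀ j, k ≤ j → j < n → f j < t := by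
    intro t h j hj1 hj2
    have h' : ((Finset.Ico k n).filter fun j => f j < t).card = n - k := h
    have hsub : ((Finset.Ico k n).filter fun j => f j < t) = Finset.Ico k n :=
      Finset.eq_of_subset_of_card_le (Finset.filter_subset _ _)
        (by rw [Nat.card_Ico]; omega)
    have hmem : j ∈ (Finset.Ico k n).filter fun j => f j < t := by
      rw [hsub]; exact Finset.mem_Ico.2 ⟨hj1, hj2⟩
    exact (Finset.mem_filter.1 hmem).2
  have hlow : ∀ j, k ≤ j → j < n → (k + 1) / 2 - 1 ≤ f j := by
    intro j hj1 hj2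
    by_cases hs1 : (k + 1) / 2 ≤ 1
    · omega
    · have h := hA0 ((k + 1) / 2 - 1) (by omega) (by omega)
      have := hnone _ h j hj1 hj2
      omega
  by_cases hke : k % 2 = 1
  · -- k odd
    left
    intro j hj1 hj2
    have hs : (k + 1) / 2 < k := by omega
    have h := hAfull ((k + 1) / 2) hs (by omega)
    have := hall _ h j hj1 hj2
    have := hlow j hj1 hj2
    omega
  · -- k even
    have hsk : (k + 1) / 2 < k := by omega
    have hm := hmin ((k + 1) / 2) (by omega) hsk
    have hA := Acnt_le (f := f) hkn ((k + 1) / 2)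
    have hd : Acnt n k f ((k + 1) / 2) = 0 ∨ Acnt n k f ((k + 1) / 2) = n - k := by omega
    rcases hd with hd | hd
    · -- no pendants up to s : all pendants at s
      right
      refine ⟨by omega, ?_⟩
      intro j hj1 hj2
      have hge := hnone _ hd j hj1 hj2
      by_cases hsk1 : (k + 1) / 2 + 1 < k
      · have h := hAfull ((k + 1) / 2 + 1) hsk1 (by omega)
        have := hall _ h j hj1 hj2
        omega
      · have := hf j hj1 hj2
        omega
    · left
      intro j hj1 hj2
      have := hall _ hd j hj1 hj2
      have := hlow j hj1 hj2
      omega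


theorem g_eq_of_same (hk2 : 2 ≤ k) (hkn : k + 1 ≤ n)
    (hf : ∀ j, k ≤ j → j < n → f j < k)
    (hsame : SameEdgeDivision n (caterpillar n k f)
      (caterpillar n k (fun _ => (k + 1) / 2 - 1))) :
    ∀ t, 1 ≤ t → t < n → gFun n k f t = gFun n k (fun _ => (k + 1) / 2 - 1) t := by
  have hfc : ∀ j, k ≤ j → j < n → (fun _ : ℕ => (k + 1) / 2 - 1) j < k := fun j _ _ => by
    show (k + 1) / 2 - 1 < k; omega
  have hbT : ∀ t ∈ Finset.Ico 1 n, gFun n k f t ∈ Finset.Icc 1 (n / 2) := by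
    intro t ht
    have h := Finset.mem_Ico.1 ht
    have hb := g_bounds (f := f) hk2 hkn h.1 h.2
    rw [Finset.mem_Icc]
    omega
  have hbC : ∀ t ∈ Finset.Ico 1 n,
      gFun n k (fun _ => (k + 1) / 2 - 1) t ∈ Finset.Icc 1 (n / 2) := by
    intro t ht
    have h := Finset.mem_Ico.1 ht
    have hb := g_bounds (f := f) hk2 hkn h.1 h.2
    rw [Finset.mem_Icc]
    omega
  have hsum : ∑ t ∈ Finset.Ico 1 n, gFun n k (fun _ => (k + 1) / 2 - 1) t
      = ∑ t ∈ Finset.Ico 1 n, gFun n k f t := by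
    rw [← sum_mul_card (Finset.Icc 1 (n / 2)) _ _ hbC,
      ← sum_mul_card (Finset.Icc 1 (n / 2)) _ _ hbT]
    refine Finset.sum_congr rfl fun i hi => ?_
    have hm := Finset.mem_Icc.1 hi
    have hri := hsame i hm.1 hm.2
    rw [r_eq hk2 hkn hf i, r_eq hk2 hkn hfc i] at hri
    rw [hri]
  have hle : ∀ t ∈ Finset.Ico 1 n,
      gFun n k (fun _ => (k + 1) / 2 - 1) t ≤ gFun n k f t := by
    intro t ht
    have h := Finset.mem_Ico.1 ht
    exact (g_bounds (f := f) hk2 hkn h.1 h.2).2.1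
  have := (Finset.sum_eq_sum_iff_of_le hle).1 hsum
  intro t h1 h2
  exact (this t (Finset.mem_Ico.2 ⟨h1, h2⟩)).symm

def flipV (n k : ℕ) (x : Fin n) : Fin n :=
  if (x : ℕ) < k then (if h2 : k - 1 - (x : ℕ) < n then ⟨k - 1 - (x : ℕ), h2⟩ else x) else x

theorem flipV_val (hkn : k ≤ n) {x : Fin n} :
    (flipV n k x : ℕ) = if (x : ℕ) < k then k - 1 - (x : ℕ) else (x : ℕ) := by
  unfold flipV
  by_cases h : (x : ℕ) < k
  · rw [if_pos h, if_pos h, dif_pos (by omega : k - 1 - (x : ℕ) < n)]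
  · rw [if_neg h, if_neg h]

theorem flipV_invol (hkn : k ≤ n) : Function.Involutive (flipV n k) := by
  intro x
  apply Fin.ext
  rw [flipV_val hkn, flipV_val hkn]
  by_cases h : (x : ℕ) < k
  · rw [if_pos h]
    rw [if_pos (by omega : k - 1 - (x : ℕ) < k)]
    omega
  · rw [if_neg h, if_neg h]

theorem iso_flip (hk2 : 2 ≤ k) (hkn : k + 1 ≤ n) (hke : k % 2 = 0)
    (hfs : ∀ j, k ≤ j → j < n → f j = (k + 1) / 2) :
    Nonempty (caterpillar n k f ≃g caterpillar n k (fun _ => (k + 1) / 2 - 1)) := by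
  have hs2 : 2 * ((k + 1) / 2) = k := by omega
  have hf : ∀ j, k ≤ j → j < n → f j < k := by
    intro j h1 h2; rw [hfs j h1 h2]; omega
  have hfc : ∀ j, k ≤ j → j < n → (fun _ : ℕ => (k + 1) / 2 - 1) j < k := fun j _ _ => by
    show (k + 1) / 2 - 1 < k; omega
  have hinv := flipV_invol (n := n) (k := k) (by omega)
  have hv : ∀ z : Fin n, ((Function.Involutive.toPerm (flipV n k) hinv) z : ℕ)
      = if (z : ℕ) < k then k - 1 - (z : ℕ) else (z : ℕ) := fun z => flipV_val (by omega)
  refine ⟨⟨Function.Involutive.toPerm (flipV n k) hinv, ?_⟩⟩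
  intro x y
  rw [cat_adj_iff hfc, cat_adj_iff hf]
  simp only [hv]
  by_cases hx : (x : ℕ) < k <;> by_cases hy : (y : ℕ) < k
  · rw [if_pos hx, if_pos hy]
    constructor
    · rintro (⟨h1, h2⟩ | ⟨h1, h2⟩ | ⟨h1, h2⟩ | ⟨h1, h2⟩) <;>
        [(right; left; omega); (left; omega); omega; omega]
    · rintro (⟨h1, h2⟩ | ⟨h1, h2⟩ | ⟨h1, h2⟩ | ⟨h1, h2⟩)
      · right; left; omega
      · left; omega
      · omega
      · omega
  · rw [if_pos hx, if_neg hy]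
    have hfy := hfs (y : ℕ) (by omega) y.isLt
    constructor
    · rintro (⟨h1, h2⟩ | ⟨h1, h2⟩ | ⟨h1, h2⟩ | ⟨h1, h2⟩) <;>
        [omega; omega; (right; right; left; omega); omega]
    · rintro (⟨h1, h2⟩ | ⟨h1, h2⟩ | ⟨h1, h2⟩ | ⟨h1, h2⟩) <;>
        [omega; omega; (right; right; left; omega); omega]
  · rw [if_neg hx, if_pos hy]
    have hfx := hfs (x : ℕ) (by omega) x.isLt
    constructor
    · rintro (⟨h1, h2⟩ | ⟨h1, h2⟩ | ⟨h1, h2⟩ | ⟨h1, h2⟩) <;>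
        [omega; omega; omega; (right; right; right; omega)]
    · rintro (⟨h1, h2⟩ | ⟨h1, h2⟩ | ⟨h1, h2⟩ | ⟨h1, h2⟩) <;>
        [omega; omega; omega; (right; right; right; omega)]
  · rw [if_neg hx, if_neg hy]
    have hfy := hfs (y : ℕ) (by omega) y.isLt
    have hfx := hfs (x : ℕ) (by omega) x.isLt
    constructor
    · rintro (⟨h1, h2⟩ | ⟨h1, h2⟩ | ⟨h1, h2⟩ | ⟨h1, h2⟩) <;> omega
    · rintro (⟨h1, h2⟩ | ⟨h1, h2⟩ | ⟨h1, h2⟩ | ⟨h1, h2⟩) <;> omega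

end Cat

/-- Let `T = CP(n; n₁, …, n_k) ∈ C(n,k)` be a caterpillar tree with respect
to the path `P_k`, where `2 ≤ k ≤ n − 1`. Then `T ⪰ CP_{n,k}^{⌈k/2⌉}`, and
`r(T) = r(CP_{n,k}^{⌈k/2⌉})` iff `T` is isomorphic to `CP_{n,k}^{⌈k/2⌉}`. -/
theorem stmt11 (n k : ℕ) (f : ℕ → ℕ) (hk2 : 2 ≤ k) (hkn : k ≤ n - 1)
    (hf : ∀ j, k ≤ j → j < n → f j < k) :
    Preceq n (cpOne n k ((k + 1) / 2)) (caterpillar n k f) ∧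
    (SameEdgeDivision n (caterpillar n k f) (cpOne n k ((k + 1) / 2)) ↔
      Nonempty (caterpillar n k f ≃g cpOne n k ((k + 1) / 2))) := by
  have hkn' : k + 1 ≤ n := by omega
  have hfc : ∀ j, k ≤ j → j < n → (fun _ : ℕ => (k + 1) / 2 - 1) j < k := fun j _ _ => by
    show (k + 1) / 2 - 1 < k; omega
  have hcp : cpOne n k ((k + 1) / 2) = caterpillar n k (fun _ => (k + 1) / 2 - 1) :=
    cpOne_eq_caterpillar n k ((k + 1) / 2)
  constructor
  · intro m hm1 hm2
    rw [hcp, tailSum_eq hk2 hkn' hfc m, tailSum_eq hk2 hkn' hf m]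
    apply Finset.card_le_card
    intro t ht
    have h := Finset.mem_filter.1 ht
    have hio := Finset.mem_Ico.1 h.1
    have hIc := Finset.mem_Icc.1 h.2
    have hb := g_bounds (f := f) hk2 hkn' hio.1 hio.2
    exact Finset.mem_filter.2 ⟨h.1, Finset.mem_Icc.2 (by omega)⟩
  · constructor
    · intro hsame
      rw [hcp] at hsame ⊢
      have heq := g_eq_of_same hk2 hkn' hf hsame
      rcases g_eq_of_f_const hk2 hkn' hf heq with hL | ⟨hke, hR⟩
      · rw [graph_eq_of_f_eq hL]
        exact ⟨⟨Equiv.refl _, Iff.rfl⟩⟩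
      · exact iso_flip hk2 hkn' hke hR
    · rintro ⟨φ⟩ i _ _
      exact iso_r_eq φ i

end TreeOrder
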